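/- For all n ≥ 1 and 0 ≤ k ≤ n-1, the Manhattan radius of the Hales-ordered level adjacency matrix satisfies r(M^(n)_{k,k+1}) ≤ Σ_{m=0}^{n-1} C(m, floor(m/2)), with equality when k = floor(n/2). -/
import Mathlib


open Finset

/-- Hamming weight of a vertex of the hypercube `{0,1}^n`. -/
def wt {n : ℕ} (u : Fin n → Bool) : ℕ := (Finset.univ.filter fun i => u i = true).card

/-- `u` is strictly greater than `v` in lexicographic order relative to the
right-to-left order of the coordinates. -/
def rtlLexGT {n : ℕ} (u v : Fin n → Bool) : Prop :=
  ∃ i, v i < u i ∧ ∀ j, i < j → u j = v j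

/-- The Hales order on `{0,1}^n`. -/
def halesLE {n : ℕ} (u v : Fin n → Bool) : Prop :=
  wt u < wt v ∨ (wt u = wt v ∧ (u = v ∨ rtlLexGT u v))

/-- The recursively defined matrices `A_k^{(n)}`, encoded as lists of rows. -/
def A : (n : ℕ) → (k : ℕ) → List (Fin n → Bool)
  | _, 0 => [fun _ => false]
  | 0, _ + 1 => []
  | n + 1, k + 1 =>
    if k + 1 = n + 1 then [fun _ => true]
    else (A n k).map (fun u => Fin.snoc u true) ++ (A n (k + 1)).map (fun u => Fin.snoc u false)

/-- The stacking `S^{(n)} = [A_0^{(n)}; …; A_n^{(n)}]`. -/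
def Sl (n : ℕ) : List (Fin n → Bool) := (List.range (n + 1)).flatMap (A n)

/-- Entry `(i, j)` (0-based) of the adjacency matrix `M^{(n)}_{k,k'}` between the
weight-`k` and weight-`k'` levels of the hypercube, both in Hales order. -/
def Mval (n k k' : ℕ) (i j : ℕ) : ℕ :=
  if hammingDist ((A n k).getD i (fun _ => false)) ((A n k').getD j (fun _ => false)) = 1
  then 1 else 0

/-- Manhattan radius `r(M^{(n)}_{k,k'})`. -/
def mr (n k k' : ℕ) : ℕ :=
  ((Finset.range (A n k).length) ×ˢ (Finset.range (A n k').length)).sup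
    (fun p => if Mval n k k' p.1 p.2 ≠ 0 then (A n k).length - p.1 + p.2 else 0)

/-- Bandwidth of a numbering of the hypercube. -/
def numBW (n : ℕ) (η : (Fin n → Bool) ≃ Fin (2 ^ n)) : ℕ :=
  Finset.univ.sup fun p : (Fin n → Bool) × (Fin n → Bool) =>
    if hammingDist p.1 p.2 = 1 then Nat.dist (η p.1) (η p.2) else 0

/-- Bandwidth of the hypercube `Q^{(n)}`. -/
noncomputable def cubeBW (n : ℕ) : ℕ := sInf (Set.range (numBW n))

/-- Minimum edge-distance of a numbering of the hypercube. -/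
noncomputable def abwOf (n : ℕ) (η : (Fin n → Bool) ≃ Fin (2 ^ n)) : ℕ :=
  sInf {d | ∃ u v : Fin n → Bool, hammingDist u v = 1 ∧ d = Nat.dist (η u) (η v)}

/-- Antibandwidth of the hypercube `Q^{(n)}`. -/
noncomputable def cubeABW (n : ℕ) : ℕ := sSup (Set.range (abwOf n))

/-- Bandwidth of the full Hales-ordered adjacency matrix `M^{(n)}`. -/
def bwM (n : ℕ) : ℕ :=
  ((Finset.range (Sl n).length) ×ˢ (Finset.range (Sl n).length)).sup
    (fun p =>
      if hammingDist ((Sl n).getD p.1 (fun _ => false)) ((Sl n).getD p.2 (fun _ => false)) = 1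
      then Nat.dist p.1 p.2 else 0)

/-- Manhattan radius of a general `s × t` matrix. -/
def manRadius {s t : ℕ} (M : Matrix (Fin s) (Fin t) ℕ) : ℕ :=
  Finset.univ.sup fun p : Fin s × Fin t => if M p.1 p.2 ≠ 0 then s - (p.1 : ℕ) + p.2 else 0

/- ### Auxiliary lemmas -/

lemma wt_snoc {n} (u : Fin n → Bool) (b : Bool) :
    wt (Fin.snoc u b : Fin (n+1) → Bool) = wt u + if b then 1 else 0 := by
  unfold wt
  rw [Finset.card_filter, Finset.card_filter, Fin.sum_univ_castSucc]
  simp [Fin.snoc_castSucc, Fin.snoc_last]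

lemma hd_snoc {n} (u v : Fin n → Bool) (b b' : Bool) :
    hammingDist (Fin.snoc u b : Fin (n+1) → Bool) (Fin.snoc v b') =
      hammingDist u v + if b = b' then 0 else 1 := by
  unfold hammingDist
  rw [Finset.card_filter, Finset.card_filter, Fin.sum_univ_castSucc]
  simp only [Fin.snoc_castSucc, Fin.snoc_last]
  rw [← Finset.card_filter]
  by_cases h : b = b' <;> simp [h]

lemma snoc_inj {n} {u v : Fin n → Bool} {b : Bool} (h : (Fin.snoc u b : Fin (n+1) → Bool) = Fin.snoc v b) :
    u = v := by
  funext i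
  have := congrFun h (Fin.castSucc i)
  simpa [Fin.snoc_castSucc] using this

lemma A_length : ∀ n k, (A n k).length = n.choose k
  | n, 0 => by simp [A]
  | 0, k+1 => by simp [A]
  | n+1, k+1 => by
    rw [A]
    split
    · next h =>
      have : k + 1 = n + 1 := h
      simp [this, Nat.choose_self]
    · simp [A_length n k, A_length n (k+1), Nat.choose_succ_succ]

lemma A_nil : ∀ n k, n < k → A n k = []
  | n, 0 => by omega
  | 0, k+1 => by simp [A]
  | n+1, k+1 => by
    intro h
    rw [A]
    split
    · omega
    · rw [A_nil n k (by omega), A_nil n (k+1) (by omega)]; rfl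

lemma wt_A : ∀ n k (u : Fin n → Bool), u ∈ A n k → wt u = k
  | n, 0, u => by
    intro h
    simp [A] at h
    subst h
    simp [wt]
  | 0, k+1, u => by simp [A]
  | n+1, k+1, u => by
    intro h
    rw [A] at h
    split at h
    · next heq =>
      simp at h
      subst h
      simp [wt, heq]
    · rw [List.mem_append] at h
      rcases h with h | h
      · rcases List.mem_map.1 h with ⟨v, hv, rfl⟩
        rw [wt_snoc, wt_A n k v hv]; simp
      · rcases List.mem_map.1 h with ⟨v, hv, rfl⟩
        rw [wt_snoc, wt_A n (k+1) v hv]; simp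

lemma A_nodup : ∀ n k, (A n k).Nodup
  | n, 0 => by simp [A]
  | 0, k+1 => by simp [A]
  | n+1, k+1 => by
    rw [A]
    split
    · simp
    · apply List.Nodup.append
      · exact (A_nodup n k).map fun _ _ h => snoc_inj h
      · exact (A_nodup n (k+1)).map fun _ _ h => snoc_inj h
      · intro x hx hy
        rcases List.mem_map.1 hx with ⟨v, _, rfl⟩
        rcases List.mem_map.1 hy with ⟨w, _, hw⟩
        have := congrFun hw (Fin.last n)
        simp [Fin.snoc_last] at this

/- ### Manhattan radius helpers -/

lemma mr_le {n k k' B : ℕ}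
    (h : ∀ i j, i < (A n k).length → j < (A n k').length →
      hammingDist ((A n k).getD i (fun _ => false)) ((A n k').getD j (fun _ => false)) = 1 →
      (A n k).length - i + j ≤ B) : mr n k k' ≤ B := by
  apply Finset.sup_le
  rintro ⟨i, j⟩ hij
  rw [Finset.mem_product, Finset.mem_range, Finset.mem_range] at hij
  dsimp only
  split
  · next hM =>
    refine h i j hij.1 hij.2 ?_
    unfold Mval at hM
    split at hM
    · assumption
    · exact absurd rfl hM
  · exact Nat.zero_le B

lemma le_mr {n k k' i j : ℕ} (hi : i < (A n k).length) (hj : j < (A n k').length)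
    (hd : hammingDist ((A n k).getD i (fun _ => false)) ((A n k').getD j (fun _ => false)) = 1) :
    (A n k).length - i + j ≤ mr n k k' := by
  have hmem : (i, j) ∈ (Finset.range (A n k).length) ×ˢ (Finset.range (A n k').length) := by
    rw [Finset.mem_product, Finset.mem_range, Finset.mem_range]; exact ⟨hi, hj⟩
  have hM : Mval n k k' i j ≠ 0 := by
    unfold Mval
    rw [if_pos hd]
    exact one_ne_zero
  have h2 := Finset.le_sup (f := fun p : ℕ × ℕ =>
      if Mval n k k' p.1 p.2 ≠ 0 then (A n k).length - p.1 + p.2 else 0) hmem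
  dsimp only at h2
  rw [if_pos hM] at h2
  exact h2

lemma mr_eq_zero {n k k' : ℕ} (h : n < k') : mr n k k' = 0 := by
  simp [mr, A_nil n k' h]

lemma hd_zero_left {n} (u : Fin n → Bool) :
    hammingDist (fun _ => false : Fin n → Bool) u = wt u := by
  unfold hammingDist wt
  congr 1
  apply Finset.filter_congr
  intro i _
  cases u i <;> simp

lemma hd_allone {n} (u : Fin n → Bool) :
    hammingDist u (fun _ => true : Fin n → Bool) = n - wt u := by
  unfold hammingDist
  have h2 := Finset.card_filter_add_card_filter_not (s := (Finset.univ : Finset (Fin n)))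
    (fun i => u i = true)
  have h3 : (Finset.univ.filter fun i => u i ≠ (fun _ => true : Fin n → Bool) i).card
      = (Finset.univ.filter fun i => ¬ u i = true).card := rfl
  rw [h3]
  unfold wt
  simp only [Finset.card_univ, Fintype.card_fin] at h2
  omega

lemma mr_zero_one (n : ℕ) : mr (n+1) 0 1 = n + 1 := by
  have hlr : (A (n+1) 0).length = 1 := by rw [A_length]; simp
  have hlc : (A (n+1) 1).length = n + 1 := by rw [A_length]; simp
  apply le_antisymm
  · apply mr_le
    intro i j hi hj _
    omega
  · have hj : n < (A (n+1) 1).length := by omega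
    have hi : 0 < (A (n+1) 0).length := by omega
    have h := le_mr hi hj ?_
    · omega
    · have e : A (n+1) 0 = [fun _ => false] := rfl
      rw [e, List.getD_cons_zero, hd_zero_left, List.getD_eq_getElem _ _ hj]
      exact wt_A _ _ _ (List.getElem_mem hj)

lemma mr_top (n : ℕ) : mr (n+1) n (n+1) = n + 1 := by
  have hlr : (A (n+1) n).length = n + 1 := by
    rw [A_length, Nat.choose_succ_self_right]
  have hlc : (A (n+1) (n+1)).length = 1 := by rw [A_length]; simp
  apply le_antisymm
  · apply mr_le
    intro i j hi hj _
    omega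
  · have hi : 0 < (A (n+1) n).length := by omega
    have hj : 0 < (A (n+1) (n+1)).length := by omega
    have h := le_mr hi hj ?_
    · omega
    · have e : A (n+1) (n+1) = [fun _ => true] := by rw [A]; simp
      rw [e, List.getD_cons_zero, List.getD_eq_getElem _ _ hi, hd_allone,
        wt_A _ _ _ (List.getElem_mem hi)]
      omega

lemma getD_mem {α : Type*} {l : List α} {i : ℕ} (hi : i < l.length) (d : α) : l.getD i d ∈ l := by
  rw [List.getD_eq_getElem _ _ hi]; exact List.getElem_mem hi

lemma getD_app_left {n : ℕ} (X : List (Fin n → Bool)) (Y : List (Fin (n+1) → Bool)) (bb : Bool)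
    {i : ℕ} (hi : i < X.length) :
    ((X.map fun u => (Fin.snoc u bb : Fin (n+1) → Bool)) ++ Y).getD i (fun _ => false) =
      Fin.snoc (X.getD i (fun _ => false)) bb := by
  rw [List.getD_eq_getElem _ _ (by simp; omega),
    List.getElem_append_left (by simpa using hi), List.getElem_map,
    List.getD_eq_getElem _ _ hi]

lemma getD_app_right {n : ℕ} (X : List (Fin (n+1) → Bool)) (Y : List (Fin n → Bool)) (bb : Bool)
    {i : ℕ} (hX : X.length ≤ i) (hi : i - X.length < Y.length) :
    (X ++ Y.map fun u => (Fin.snoc u bb : Fin (n+1) → Bool)).getD i (fun _ => false) =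
      Fin.snoc (Y.getD (i - X.length) (fun _ => false)) bb := by
  rw [List.getD_eq_getElem _ _ (by simp; omega),
    List.getElem_append_right hX, List.getElem_map,
    List.getD_eq_getElem _ _ hi]

lemma mr_rec (n k : ℕ) (h : k + 2 ≤ n) :
    mr (n+1) (k+1) (k+2) = n.choose (k+1) + max (mr n k (k+1)) (mr n (k+1) (k+2)) := by
  have ha : (A n k).length = n.choose k := A_length n k
  have hb : (A n (k+1)).length = n.choose (k+1) := A_length n (k+1)
  have hc : (A n (k+2)).length = n.choose (k+2) := A_length n (k+2)
  have hapos : 0 < (A n k).length := by rw [ha]; exact Nat.choose_pos (by omega)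
  have hbpos : 0 < (A n (k+1)).length := by rw [hb]; exact Nat.choose_pos (by omega)
  have hcpos : 0 < (A n (k+2)).length := by rw [hc]; exact Nat.choose_pos (by omega)
  have hrow : A (n+1) (k+1) =
      (A n k).map (fun u => Fin.snoc u true) ++ (A n (k+1)).map (fun u => Fin.snoc u false) := by
    rw [A, if_neg (by omega)]
  have hcol : A (n+1) (k+2) =
      (A n (k+1)).map (fun u => Fin.snoc u true) ++ (A n (k+2)).map (fun u => Fin.snoc u false) := by
    rw [A, if_neg (by omega)]
  have lm1 : ((A n k).map (fun u => (Fin.snoc u true : Fin (n+1) → Bool))).length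
      = (A n k).length := by simp
  have lm2 : ((A n (k+1)).map (fun u => (Fin.snoc u true : Fin (n+1) → Bool))).length
      = (A n (k+1)).length := by simp
  have hrlen : (A (n+1) (k+1)).length = (A n k).length + (A n (k+1)).length := by
    rw [hrow]; simp
  have hclen : (A (n+1) (k+2)).length = (A n (k+1)).length + (A n (k+2)).length := by
    rw [hcol]; simp
  -- the identity-block entry gives a lower bound of b
  have hbase : (A n (k+1)).length ≤ mr (n+1) (k+1) (k+2) := by
    have hi : ((A n k).map (fun u => (Fin.snoc u true : Fin (n+1) → Bool))).length
        < (A (n+1) (k+1)).length := by omega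
    have hj : 0 < (A (n+1) (k+2)).length := by omega
    have hdist : hammingDist
        ((A (n+1) (k+1)).getD ((A n k).map (fun u => (Fin.snoc u true : Fin (n+1) → Bool))).length
          (fun _ => false))
        ((A (n+1) (k+2)).getD 0 (fun _ => false)) = 1 := by
      rw [hrow, hcol, getD_app_right _ _ _ (le_refl _) (by omega),
        getD_app_left _ _ _ hbpos, Nat.sub_self, hd_snoc]
      simp
    have := le_mr hi hj hdist
    omega
  -- lower bound from the P block
  have h1 : n.choose (k+1) + mr n k (k+1) ≤ mr (n+1) (k+1) (k+2) := by
    obtain ⟨⟨i, j⟩, hmem, hsup⟩ := Finset.exists_mem_eq_sup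
      ((Finset.range (A n k).length) ×ˢ (Finset.range (A n (k+1)).length))
      (by
        rw [Finset.nonempty_product]
        exact ⟨Finset.nonempty_range_iff.2 (by omega), Finset.nonempty_range_iff.2 (by omega)⟩)
      (fun p => if Mval n k (k+1) p.1 p.2 ≠ 0 then (A n k).length - p.1 + p.2 else 0)
    rw [Finset.mem_product, Finset.mem_range, Finset.mem_range] at hmem
    have e : mr n k (k+1) = if Mval n k (k+1) i j ≠ 0 then (A n k).length - i + j else 0 := hsup
    by_cases hM : Mval n k (k+1) i j ≠ 0
    · rw [e, if_pos hM]
      have hdist1 : hammingDist ((A n k).getD i (fun _ => false))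
          ((A n (k+1)).getD j (fun _ => false)) = 1 := by
        unfold Mval at hM
        split at hM
        · assumption
        · exact absurd rfl hM
      have hdist : hammingDist ((A (n+1) (k+1)).getD i (fun _ => false))
          ((A (n+1) (k+2)).getD j (fun _ => false)) = 1 := by
        rw [hrow, hcol, getD_app_left _ _ _ hmem.1, getD_app_left _ _ _ hmem.2, hd_snoc, hdist1]
        simp
      have := le_mr (show i < (A (n+1) (k+1)).length by omega)
        (show j < (A (n+1) (k+2)).length by omega) hdist
      omega
    · rw [e, if_neg hM]
      omega
  -- lower bound from the Q block
  have h2 : n.choose (k+1) + mr n (k+1) (k+2) ≤ mr (n+1) (k+1) (k+2) := by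
    obtain ⟨⟨i, j⟩, hmem, hsup⟩ := Finset.exists_mem_eq_sup
      ((Finset.range (A n (k+1)).length) ×ˢ (Finset.range (A n (k+2)).length))
      (by
        rw [Finset.nonempty_product]
        exact ⟨Finset.nonempty_range_iff.2 (by omega), Finset.nonempty_range_iff.2 (by omega)⟩)
      (fun p => if Mval n (k+1) (k+2) p.1 p.2 ≠ 0 then (A n (k+1)).length - p.1 + p.2 else 0)
    rw [Finset.mem_product, Finset.mem_range, Finset.mem_range] at hmem
    have e : mr n (k+1) (k+2)
        = if Mval n (k+1) (k+2) i j ≠ 0 then (A n (k+1)).length - i + j else 0 := hsup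
    by_cases hM : Mval n (k+1) (k+2) i j ≠ 0
    · rw [e, if_pos hM]
      have hdist1 : hammingDist ((A n (k+1)).getD i (fun _ => false))
          ((A n (k+2)).getD j (fun _ => false)) = 1 := by
        unfold Mval at hM
        split at hM
        · assumption
        · exact absurd rfl hM
      have hdist : hammingDist
          ((A (n+1) (k+1)).getD
            (((A n k).map (fun u => (Fin.snoc u true : Fin (n+1) → Bool))).length + i)
            (fun _ => false))
          ((A (n+1) (k+2)).getD
            (((A n (k+1)).map (fun u => (Fin.snoc u true : Fin (n+1) → Bool))).length + j)
            (fun _ => false)) = 1 := by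
        rw [hrow, hcol, getD_app_right _ _ _ (by omega) (by omega),
          getD_app_right _ _ _ (by omega) (by omega), Nat.add_sub_cancel_left,
          Nat.add_sub_cancel_left, hd_snoc, hdist1]
        simp
      have := le_mr
        (show ((A n k).map (fun u => (Fin.snoc u true : Fin (n+1) → Bool))).length + i
            < (A (n+1) (k+1)).length by omega)
        (show ((A n (k+1)).map (fun u => (Fin.snoc u true : Fin (n+1) → Bool))).length + j
            < (A (n+1) (k+2)).length by omega) hdist
      omega
    · rw [e, if_neg hM]
      omega
  apply le_antisymm
  · apply mr_le
    intro i j hi hj hdist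
    rw [hrlen] at hi
    rw [hclen] at hj
    rw [hrow, hcol] at hdist
    rcases Nat.lt_or_ge i (A n k).length with hia | hia
    · rcases Nat.lt_or_ge j (A n (k+1)).length with hjb | hjb
      · -- (T,T) block
        rw [getD_app_left _ _ _ hia, getD_app_left _ _ _ hjb, hd_snoc] at hdist
        simp only [if_pos rfl, Nat.add_zero] at hdist
        have := le_mr hia hjb hdist
        have hmax := le_max_left (mr n k (k+1)) (mr n (k+1) (k+2))
        omega
      · -- (T,F) block : impossible
        rw [getD_app_left _ _ _ hia,
          getD_app_right _ _ _ (by omega) (by omega), hd_snoc] at hdist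
        simp only [Bool.true_eq_false, if_neg, ite_false] at hdist
        have hdist0 : hammingDist ((A n k).getD i (fun _ => false))
            ((A n (k+2)).getD (j - ((A n (k+1)).map
              (fun u => (Fin.snoc u true : Fin (n+1) → Bool))).length) (fun _ => false)) = 0 := by
          omega
        rw [hammingDist_eq_zero] at hdist0
        have w1 : wt ((A n k).getD i (fun _ => false)) = k := wt_A _ _ _ (getD_mem hia _)
        have w2 : wt ((A n (k+2)).getD (j - ((A n (k+1)).map
            (fun u => (Fin.snoc u true : Fin (n+1) → Bool))).length) (fun _ => false)) = k + 2 :=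
          wt_A _ _ _ (getD_mem (by omega) _)
        rw [hdist0, w2] at w1
        omega
    · rcases Nat.lt_or_ge j (A n (k+1)).length with hjb | hjb
      · -- (F,T) block : identity
        rw [getD_app_right _ _ _ (by omega) (by omega),
          getD_app_left _ _ _ hjb, hd_snoc] at hdist
        simp only [Bool.false_eq_true, if_neg, ite_false] at hdist
        have hdist0 : hammingDist ((A n (k+1)).getD (i - ((A n k).map
            (fun u => (Fin.snoc u true : Fin (n+1) → Bool))).length) (fun _ => false))
            ((A n (k+1)).getD j (fun _ => false)) = 0 := by omega
        rw [hammingDist_eq_zero] at hdist0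
        rw [List.getD_eq_getElem _ _ (show i - ((A n k).map
            (fun u => (Fin.snoc u true : Fin (n+1) → Bool))).length < (A n (k+1)).length
            by omega), List.getD_eq_getElem _ _ hjb] at hdist0
        have := (A_nodup n (k+1)).getElem_inj_iff.mp hdist0
        omega
      · -- (F,F) block
        rw [getD_app_right _ _ _ (by omega) (by omega),
          getD_app_right _ _ _ (by omega) (by omega), hd_snoc] at hdist
        simp only [if_pos rfl, Nat.add_zero] at hdist
        have := le_mr (show i - ((A n k).map
            (fun u => (Fin.snoc u true : Fin (n+1) → Bool))).length < (A n (k+1)).length by omega)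
          (show j - ((A n (k+1)).map
            (fun u => (Fin.snoc u true : Fin (n+1) → Bool))).length < (A n (k+2)).length by omega)
          hdist
        have hmax := le_max_right (mr n k (k+1)) (mr n (k+1) (k+2))
        omega
  · rw [max_def]
    split
    · exact h2
    · exact h1

lemma S_ge (n : ℕ) : n ≤ ∑ m ∈ Finset.range n, m.choose (m / 2) := by
  calc n = ∑ _m ∈ Finset.range n, 1 := by simp
  _ ≤ _ := Finset.sum_le_sum fun i _ => Nat.choose_pos (Nat.div_le_self i 2)

lemma choose_mid (n : ℕ) : n.choose ((n+1)/2) = n.choose (n/2) := by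
  rcases Nat.even_or_odd n with ⟨m, hm⟩ | ⟨m, hm⟩
  · subst hm; congr 1; omega
  · subst hm
    rw [show (2*m+1+1)/2 = m+1 by omega, show (2*m+1)/2 = m by omega]
    have h2 := Nat.choose_symm (n := 2*m+1) (k := m+1) (by omega)
    rw [show 2*m+1 - (m+1) = m by omega] at h2
    exact h2.symm

lemma main_aux : ∀ n, 1 ≤ n →
    (∀ k, mr n k (k+1) ≤ ∑ m ∈ Finset.range n, m.choose (m / 2)) ∧
      mr n (n / 2) (n / 2 + 1) = ∑ m ∈ Finset.range n, m.choose (m / 2) := by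
  intro n
  induction n with
  | zero => omega
  | succ n ih =>
    intro _
    by_cases hn : n = 0
    · subst hn
      have hS1 : ∑ m ∈ Finset.range 1, m.choose (m / 2) = 1 := by simp
      rw [hS1]
      constructor
      · intro k
        match k with
        | 0 =>
          show mr 1 0 1 ≤ 1
          exact le_of_eq (mr_zero_one 0)
        | k+1 =>
          rw [mr_eq_zero (show 1 < k + 2 by omega)]
          exact Nat.zero_le _
      · show mr 1 0 1 = 1
        exact mr_zero_one 0
    · have hn1 : 1 ≤ n := by omega
      obtain ⟨ihb, ihe⟩ := ih hn1
      have hS : ∑ m ∈ Finset.range (n+1), m.choose (m / 2)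
          = (∑ m ∈ Finset.range n, m.choose (m / 2)) + n.choose (n / 2) :=
        Finset.sum_range_succ _ _
      have hSn : n + 1 ≤ ∑ m ∈ Finset.range (n+1), m.choose (m / 2) := S_ge (n+1)
      have bound : ∀ j, mr (n+1) j (j+1) ≤ ∑ m ∈ Finset.range (n+1), m.choose (m / 2) := by
        intro j
        match j with
        | 0 =>
          show mr (n+1) 0 1 ≤ _
          rw [mr_zero_one]
          exact hSn
        | j+1 =>
          rcases Nat.lt_or_ge (j+2) (n+1) with hj | hj
          · show mr (n+1) (j+1) (j+2) ≤ _
            rw [mr_rec n j (by omega)]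
            have c1 := Nat.choose_le_middle (j+1) n
            have m2 : mr n (j+1) (j+2) ≤ ∑ m ∈ Finset.range n, m.choose (m / 2) := ihb (j+1)
            have hmx := max_le (ihb j) m2
            omega
          · rcases Nat.eq_or_lt_of_le hj with hj' | hj'
            · rw [show j + 1 = n by omega]
              rw [mr_top n]
              exact hSn
            · rw [mr_eq_zero (show n + 1 < j + 2 by omega)]
              exact Nat.zero_le _
      refine ⟨bound, ?_⟩
      by_cases h2 : n = 1
      · subst h2
        show mr 2 1 2 = _
        rw [mr_top 1]
        simp [Finset.sum_range_succ]
      · obtain ⟨k, hk⟩ : ∃ k, (n+1)/2 = k + 1 := ⟨(n+1)/2 - 1, by omega⟩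
        rw [hk]
        show mr (n+1) (k+1) (k+2) = _
        rw [mr_rec n k (by omega)]
        have hch : n.choose (k+1) = n.choose (n/2) := by rw [← hk]; exact choose_mid n
        have hmax : max (mr n k (k+1)) (mr n (k+1) (k+2))
            = ∑ m ∈ Finset.range n, m.choose (m / 2) := by
          rcases (by omega : k = n/2 ∨ k + 1 = n/2) with hkk | hkk
          · have hA : mr n k (k+1) = ∑ m ∈ Finset.range n, m.choose (m / 2) := by
              rw [show k + 1 = n/2 + 1 by omega, hkk]
              exact ihe
            rw [hA]
            exact max_eq_left (ihb (k+1))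
          · have hB : mr n (k+1) (k+2) = ∑ m ∈ Finset.range n, m.choose (m / 2) := by
              rw [show k + 2 = n/2 + 1 by omega, hkk]
              exact ihe
            rw [hB]
            exact max_eq_right (ihb k)
        rw [hmax, hch, hS]
        omega

/-- For `n ≥ 1` and `0 ≤ k ≤ n-1`,
`r(M^{(n)}_{k,k+1}) ≤ ∑_{m=0}^{n-1} C(m,⌊m/2⌋)`, with equality when `k = ⌊n/2⌋`. -/
theorem manhattan_radius_bound (n : ℕ) (hn : 1 ≤ n) :
    (∀ k, k + 1 ≤ n → mr n k (k + 1) ≤ ∑ m ∈ Finset.range n, m.choose (m / 2)) ∧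
      mr n (n / 2) (n / 2 + 1) = ∑ m ∈ Finset.range n, m.choose (m / 2) := by
  obtain ⟨hb, he⟩ := main_aux n hn
  exact ⟨fun k _ => hb k, he⟩
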